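/- [Theorem 4.2, integrality] For every Laurent polynomial Ω ∈ ℤ[x₁^{±1},…,x_n^{±1}] with integer coefficients, the power series Ω(x₊(4y₁),…,x₊(4y_n)) ∈ ℚ[[y₁,…,y_n]] has integer coefficients, i.e., it lies in the image of ℤ[[y₁,…,y_n]]. (In the paper's notation: ℧(4y₁,…,4y_n) ∈ ℤ[[y₁,…,y_n]], where ℧(z₁,…,z_n) = Ω(x₊(z₁),…,x₊(z_n)).) -/

import Mathlib

noncomputable section

/-- The Laurent polynomial ring `Λ = ℚ[x₁^{±1},…,x_n^{±1}]`. -/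
abbrev Lam (n : ℕ) : Type := AddMonoidAlgebra ℚ (Fin n →₀ ℤ)

/-- The variable `x_i ∈ Λ`. -/
def Xv {n : ℕ} (i : Fin n) : Lam n :=
  AddMonoidAlgebra.single (Finsupp.single i 1) 1

/-- The image of a one-variable power series under the substitution `z ↦ z_i`,
as an element of `ℚ[[z₁,…,z_n]]`. -/
def substXi {n : ℕ} (i : Fin n) (f : PowerSeries ℚ) : MvPowerSeries (Fin n) ℚ :=
  fun d => if d = Finsupp.single i (d i) then PowerSeries.coeff (d i) f else 0

/-- Evaluation `Ω(u₁,…,u_n)` of a Laurent polynomial `Ω ∈ Λ` at a family of units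
`u_i` of a commutative `ℚ`-algebra `A`. -/
def evalUnits {n : ℕ} {A : Type} [CommRing A] [Algebra ℚ A]
    (u : Fin n → Aˣ) (Ω : Lam n) : A :=
  (Ω.coeff : (Fin n →₀ ℤ) →₀ ℚ).sum fun a c => algebraMap ℚ A c * ((∏ i, u i ^ (a i) : Aˣ) : A)

private lemma sum_four_mul {α : Type*} (s : Finset α) (g : α → ℚ)
    (h : ∀ p ∈ s, ∃ m : ℤ, g p = 4 * m) : ∃ M : ℤ, ∑ p ∈ s, g p = 4 * M := by
  classical
  induction s using Finset.cons_induction with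
  | empty => exact ⟨0, by simp⟩
  | cons x s hx ih =>
    obtain ⟨M, hM⟩ := ih fun p hp => h p (Finset.mem_cons.mpr (Or.inr hp))
    obtain ⟨m, hm⟩ := h x (Finset.mem_cons.mpr (Or.inl rfl))
    refine ⟨m + M, ?_⟩
    rw [Finset.sum_cons, hm, hM]
    push_cast; ring

private lemma coeff_integral (xp : PowerSeries ℚ)
    (hxp1 : PowerSeries.constantCoeff xp = 1)
    (hxpq : xp ^ 2 - PowerSeries.X * xp - 1 = 0) :
    ∀ k : ℕ, ∃ m : ℤ, (4:ℚ)^k * PowerSeries.coeff k xp = m ∧ (1 ≤ k → 2 ∣ m) := by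
  set a : ℕ → ℚ := fun k => (4:ℚ)^k * PowerSeries.coeff k xp with ha
  have ha0 : a 0 = 1 := by
    simp [ha, PowerSeries.coeff_zero_eq_constantCoeff, hxp1]
  have heq : xp ^ 2 = PowerSeries.X * xp + 1 := by linear_combination hxpq
  have key : ∀ k : ℕ, ∑ p ∈ Finset.HasAntidiagonal.antidiagonal (k+1), a p.1 * a p.2 = 4 * a k := by
    intro k
    have h1 : PowerSeries.coeff (k+1) (xp^2) = PowerSeries.coeff k xp := by
      rw [heq, map_add, PowerSeries.coeff_succ_X_mul, PowerSeries.coeff_one,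
        if_neg (Nat.succ_ne_zero k), add_zero]
    rw [sq, PowerSeries.coeff_mul] at h1
    calc ∑ p ∈ Finset.HasAntidiagonal.antidiagonal (k+1), a p.1 * a p.2
        = (4:ℚ)^(k+1) * ∑ p ∈ Finset.HasAntidiagonal.antidiagonal (k+1),
            PowerSeries.coeff p.1 xp * PowerSeries.coeff p.2 xp := by
          rw [Finset.mul_sum]
          refine Finset.sum_congr rfl fun p hp => ?_
          have hp' : p.1 + p.2 = k + 1 := Finset.HasAntidiagonal.mem_antidiagonal.mp hp
          simp only [ha]
          rw [← hp', pow_add]; ring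
      _ = 4 * a k := by rw [h1, ha]; ring
  intro k
  induction k using Nat.strong_induction_on with
  | _ k ih =>
    match k with
    | 0 =>
      refine ⟨1, ?_, fun h => absurd h (by norm_num)⟩
      show a 0 = ((1:ℤ):ℚ)
      rw [ha0]; norm_num
    | (j+1) =>
      have hk := key j
      have hmem0 : ((0 : ℕ), j+1) ∈ Finset.HasAntidiagonal.antidiagonal (j+1) := by simp
      have hne : ((j+1 : ℕ), 0) ≠ ((0:ℕ), j+1) := by simp
      have hmem1 : ((j+1 : ℕ), 0) ∈ (Finset.HasAntidiagonal.antidiagonal (j+1)).erase (0, j+1) :=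
        Finset.mem_erase.mpr ⟨hne, by simp⟩
      set t := ((Finset.HasAntidiagonal.antidiagonal (j+1)).erase (0, j+1)).erase (j+1, 0) with ht
      have hsplit : ∑ p ∈ Finset.HasAntidiagonal.antidiagonal (j+1), a p.1 * a p.2
          = a 0 * a (j+1) + (a (j+1) * a 0 + ∑ p ∈ t, a p.1 * a p.2) := by
        rw [← Finset.add_sum_erase _ _ hmem0, ← Finset.add_sum_erase _ _ hmem1]
      obtain ⟨M, hM⟩ : ∃ M : ℤ, ∑ p ∈ t, a p.1 * a p.2 = 4 * M := by
        apply sum_four_mul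
        intro p hp
        have h2 := Finset.mem_erase.mp hp
        have h3 := Finset.mem_erase.mp h2.2
        have hp2 : p ≠ (j+1, 0) := h2.1
        have hp1 : p ≠ (0, j+1) := h3.1
        have hsum : p.1 + p.2 = j + 1 := Finset.HasAntidiagonal.mem_antidiagonal.mp h3.2
        obtain ⟨x, y⟩ := p
        simp only [ne_eq, Prod.mk.injEq, not_and] at hp1 hp2
        simp only at hsum
        have hx : 1 ≤ x := by omega
        have hy : 1 ≤ y := by omega
        obtain ⟨m1, hm1, hd1⟩ := ih x (by omega)
        obtain ⟨m2, hm2, hd2⟩ := ih y (by omega)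
        obtain ⟨n1, hn1⟩ := hd1 hx
        obtain ⟨n2, hn2⟩ := hd2 hy
        refine ⟨n1 * n2, ?_⟩
        show a x * a y = 4 * ((n1*n2 : ℤ) : ℚ)
        simp only [ha]
        rw [hm1, hm2, hn1, hn2]; push_cast; ring
      obtain ⟨mj, hmj, _⟩ := ih j (by omega)
      refine ⟨2 * (mj - M), ?_, fun _ => ⟨mj - M, rfl⟩⟩
      have hval : a (j+1) = 2 * a j - 2 * M := by
        rw [hsplit, hM, ha0] at hk
        linarith
      show a (j+1) = ((2 * (mj - M) : ℤ) : ℚ)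
      rw [hval]
      have haj : a j = (mj : ℚ) := hmj
      rw [haj]; push_cast; ring

/-- Theorem 4.2 (integrality): for a Laurent polynomial `Ω` with integer coefficients,
the power series `℧(4y₁,…,4y_n) = Ω(x₊(4y₁),…,x₊(4y_n))` has integer coefficients. -/
theorem substitution_four_y_integral (n : ℕ) (xp : PowerSeries ℚ)
    (hxp1 : PowerSeries.constantCoeff xp = 1)
    (hxpq : xp ^ 2 - PowerSeries.X * xp - 1 = 0)
    (Ω : Lam n) (hint : ∀ a : Fin n →₀ ℤ, ∃ m : ℤ, (Ω.coeff : (Fin n →₀ ℤ) →₀ ℚ) a = (m : ℚ))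
    (u : Fin n → (MvPowerSeries (Fin n) ℚ)ˣ)
    (hu : ∀ i, (u i : MvPowerSeries (Fin n) ℚ) = substXi i (PowerSeries.rescale (4 : ℚ) xp)) :
    ∀ d : Fin n →₀ ℕ, ∃ m : ℤ, MvPowerSeries.coeff d (evalUnits u Ω) = (m : ℚ) := by
  classical
  choose m hm _ using coeff_integral xp hxp1 hxpq
  set g : PowerSeries ℤ := PowerSeries.mk m with hg
  set φ : MvPowerSeries (Fin n) ℤ →+* MvPowerSeries (Fin n) ℚ :=
    MvPowerSeries.map (Int.castRingHom ℚ) with hφ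
  set w : Fin n → MvPowerSeries (Fin n) ℤ := fun i d =>
    if d = Finsupp.single i (d i) then PowerSeries.coeff (d i) g else 0 with hwdef
  have hφw : ∀ i, φ (w i) = (u i : MvPowerSeries (Fin n) ℚ) := by
    intro i
    rw [hu i]
    apply MvPowerSeries.ext
    intro d
    rw [MvPowerSeries.coeff_map]
    have h1 : (MvPowerSeries.coeff d) (w i)
        = if d = Finsupp.single i (d i) then m (d i) else 0 := by
      show (if d = Finsupp.single i (d i) then PowerSeries.coeff (d i) g else 0) = _
      rw [hg, PowerSeries.coeff_mk]
    have h2 : (MvPowerSeries.coeff d) (substXi i (PowerSeries.rescale (4:ℚ) xp)) =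
        if d = Finsupp.single i (d i) then (4:ℚ)^(d i) * PowerSeries.coeff (d i) xp else 0 := by
      show (if d = Finsupp.single i (d i)
          then PowerSeries.coeff (d i) (PowerSeries.rescale (4:ℚ) xp) else 0) = _
      rw [PowerSeries.coeff_rescale]
    rw [h1, h2]
    split
    · rw [hm (d i)]
      exact eq_intCast _ _
    · simp
  have hcw : ∀ i, MvPowerSeries.constantCoeff (w i) = 1 := by
    intro i
    have hm0 : m 0 = 1 := by
      have h0 : ((m 0 : ℤ) : ℚ) = 1 := by
        rw [← hm 0]
        simp [PowerSeries.coeff_zero_eq_constantCoeff, hxp1]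
      exact_mod_cast h0
    rw [← MvPowerSeries.coeff_zero_eq_constantCoeff_apply]
    have h0i : (0 : Fin n →₀ ℕ) = Finsupp.single i ((0 : Fin n →₀ ℕ) i) := by simp
    show (if (0 : Fin n →₀ ℕ) = Finsupp.single i ((0 : Fin n →₀ ℕ) i)
        then PowerSeries.coeff ((0 : Fin n →₀ ℕ) i) g else 0) = 1
    rw [if_pos h0i]
    have : ((0 : Fin n →₀ ℕ) i) = 0 := rfl
    rw [this, hg, PowerSeries.coeff_mk, hm0]
  have hUnit : ∀ i, IsUnit (w i) := fun i =>
    MvPowerSeries.isUnit_iff_constantCoeff.mpr (by rw [hcw i]; exact isUnit_one)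
  choose W hW using hUnit
  have hWu : ∀ i, Units.map (φ : MvPowerSeries (Fin n) ℤ →* MvPowerSeries (Fin n) ℚ) (W i) = u i := by
    intro i
    apply Units.ext
    show φ ((W i : MvPowerSeries (Fin n) ℤ)) = (u i : MvPowerSeries (Fin n) ℚ)
    rw [hW i]
    exact hφw i
  intro d
  have hmem : MvPowerSeries.coeff d (evalUnits u Ω) ∈ (Int.castRingHom ℚ).range := by
    simp only [evalUnits, Finsupp.sum]
    rw [map_sum]
    apply Subring.sum_mem
    intro a ha
    have hprod : ((∏ i, u i ^ (a i) : (MvPowerSeries (Fin n) ℚ)ˣ) : MvPowerSeries (Fin n) ℚ)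
        = φ (((∏ i, W i ^ (a i) : (MvPowerSeries (Fin n) ℤ)ˣ) : MvPowerSeries (Fin n) ℤ)) := by
      have hup : (∏ i, u i ^ (a i) : (MvPowerSeries (Fin n) ℚ)ˣ)
          = Units.map (φ : MvPowerSeries (Fin n) ℤ →* MvPowerSeries (Fin n) ℚ)
              (∏ i, W i ^ (a i)) := by
        rw [map_prod]
        refine Finset.prod_congr rfl fun i _ => ?_
        rw [map_zpow, hWu i]
      rw [hup]
      rfl
    obtain ⟨c, hc⟩ := hint a
    rw [MvPowerSeries.algebraMap_apply, hprod, MvPowerSeries.coeff_C_mul,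
      MvPowerSeries.coeff_map, hc]
    refine ⟨c * MvPowerSeries.coeff d ((∏ i, W i ^ (a i) : (MvPowerSeries (Fin n) ℤ)ˣ) :
      MvPowerSeries (Fin n) ℤ), ?_⟩
    push_cast
    simp
  obtain ⟨q, hq⟩ := hmem
  exact ⟨q, hq.symm⟩

end
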